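/- Let (A, B) be a PCSP template, F a free group on a finite set, m ≥ 1, and φ: Pol(A, B) → Pol(ℤ^m, F) a minion homomorphism. Then there exists a number N ∈ ℕ such that for every f ∈ Pol(A, B), the essential arity of φ(f) is at most N. -/

import Mathlib

/-- `f : Aⁿ → B` is a polymorphism of the pair of similar relational structures
given by relations `RA i ⊆ A^(ar i)` and `RB i ⊆ B^(ar i)`. -/
def IsPolymorphism {A B : Type*} {w : ℕ} {ar : Fin w → ℕ}
    (RA : ∀ i, Set (Fin (ar i) → A)) (RB : ∀ i, Set (Fin (ar i) → B))
    {n : ℕ} (f : (Fin n → A) → B) : Prop :=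
  ∀ i : Fin w, ∀ ts : Fin n → (Fin (ar i) → A),
    (∀ j, ts j ∈ RA i) → (fun p => f (fun j => ts j p)) ∈ RB i

namespace TFAux
open FreeGroup List

variable {α : Type*} [DecidableEq α]

/-- no-cancellation relation between adjacent letters -/
def R : (α × Bool) → (α × Bool) → Prop := fun a b => ¬(a.1 = b.1 ∧ a.2 = !b.2)

/-- n-fold concatenation of a word -/
def npl (L : List (α × Bool)) : ℕ → List (α × Bool)
  | 0 => []
  | n+1 => L ++ npl L n

lemma reduce_eq_self_of_chain' : ∀ {L : List (α × Bool)}, List.Chain' R L → FreeGroup.reduce L = L := by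
  intro L
  induction L with
  | nil => intro _; rfl
  | cons x t ih =>
    intro h
    replace h := List.isChain_cons.mp h
    rw [FreeGroup.reduce.cons, ih h.2]
    cases t with
    | nil => rfl
    | cons hd tl =>
      have hR : R x hd := h.1 hd rfl
      simp only []
      rw [if_neg hR]

lemma chain'_of_reduce_eq_self : ∀ {L : List (α × Bool)}, FreeGroup.reduce L = L → List.Chain' R L := by
  intro L
  induction L with
  | nil => intro _; exact List.isChain_nil
  | cons x t ih =>
    intro h
    rw [FreeGroup.reduce.cons] at h
    have hlen : (FreeGroup.reduce t).length ≤ t.length :=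
      (FreeGroup.reduce.red (L := t)).length_le
    cases hr : FreeGroup.reduce t with
    | nil =>
      rw [hr] at h
      simp only [] at h
      have ht0 : t = [] := by
        injection h with h1 h2
        exact h2.symm
      subst ht0
      exact List.isChain_singleton x
    | cons hd tl =>
      rw [hr] at h hlen
      simp only [] at h
      by_cases hc : x.1 = hd.1 ∧ x.2 = !hd.2
      · rw [if_pos hc] at h
        have := congrArg List.length h
        simp at this
        simp at hlen
        omega
      · rw [if_neg hc] at h
        have ht : t = hd :: tl := by
          injection h with h1 h2
          exact h2.symm
        have : FreeGroup.reduce t = t := by rw [hr, ht]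
        have hch := ih this
        apply List.isChain_cons.mpr
        refine ⟨?_, hch⟩
        intro y hy
        rw [ht] at hy
        simp at hy
        subst hy
        exact hc

lemma head?_npl {L : List (α × Bool)} (hL : L ≠ []) (k : ℕ) :
    (npl L (k+1)).head? = L.head? := by
  cases L with
  | nil => exact absurd rfl hL
  | cons a t => rfl

lemma chain'_npl {L : List (α × Bool)} (hL : L ≠ [])
    (hc : List.Chain' R L) (hlast : R (L.getLast hL) (L.head hL)) :
    ∀ n : ℕ, List.Chain' R (npl L n) := by
  intro n
  induction n with
  | zero => exact List.isChain_nil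
  | succ k ihk =>
    show List.Chain' R (L ++ npl L k)
    apply List.isChain_append.mpr
    refine ⟨hc, ihk, ?_⟩
    intro a ha b hb
    have ha' : a = L.getLast hL := by
      rw [List.getLast?_eq_getLast hL] at ha
      injection ha with h
      exact h.symm
    cases k with
    | zero => simp [npl] at hb
    | succ k' =>
      have hb' : b = L.head hL := by
        rw [head?_npl hL k'] at hb
        rw [List.head?_eq_head hL] at hb
        injection hb with h
        exact h.symm
      rw [ha', hb']
      exact hlast

lemma mk_npl (L : List (α × Bool)) :
    ∀ n : ℕ, FreeGroup.mk (npl L n) = (FreeGroup.mk L) ^ n := by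
  intro n
  induction n with
  | zero => simp [npl, FreeGroup.one_eq_mk]
  | succ k ih =>
    show FreeGroup.mk (L ++ npl L k) = (FreeGroup.mk L) ^ (k+1)
    rw [← FreeGroup.mul_mk, ih, pow_succ']

theorem pow_succ_ne_one : ∀ (N : ℕ) (x : FreeGroup α), x.norm ≤ N → x ≠ 1 →
    ∀ n : ℕ, x ^ (n+1) ≠ 1 := by
  intro N
  induction N using Nat.strong_induction_on with
  | _ N IH =>
    intro x hxN hne n hpow
    set L := x.toWord with hLdef
    have hred : FreeGroup.reduce L = L := FreeGroup.reduce_toWord x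
    have hchain : List.Chain' R L := chain'_of_reduce_eq_self hred
    have hLne : L ≠ [] := by
      intro h
      exact hne (FreeGroup.toWord_eq_nil_iff.mp h)
    by_cases hcyc : R (L.getLast hLne) (L.head hLne)
    · -- cyclically reduced case
      have hxL : x = FreeGroup.mk L := (FreeGroup.mk_toWord).symm
      have hredj : FreeGroup.reduce (npl L (n+1)) = npl L (n+1) :=
        reduce_eq_self_of_chain' (chain'_npl hLne hchain hcyc (n+1))
      have hx1 : x ^ (n+1) = FreeGroup.mk (npl L (n+1)) := by
        rw [hxL, mk_npl]
      have htw : (x ^ (n+1)).toWord = npl L (n+1) := by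
        rw [hx1, FreeGroup.toWord_mk, hredj]
      have hne' : npl L (n+1) ≠ [] := by
        show L ++ npl L n ≠ []
        intro h
        exact hLne (List.append_eq_nil_iff.mp h).1
      rw [hpow, FreeGroup.toWord_one] at htw
      exact hne' htw.symm
    · -- conjugate case
      unfold R at hcyc
      push_neg at hcyc
      set c := L.head hLne with hc
      have htail : L.tail ≠ [] := by
        intro htl
        have hLc : L.getLast? = some c := by
          conv_lhs => rw [← List.cons_head_tail hLne]
          rw [htl]
          rfl
        rw [List.getLast?_eq_getLast hLne] at hLc
        have hgl : L.getLast hLne = c := by injection hLc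
        rw [hgl] at hcyc
        have := hcyc.2
        simp at this
      obtain hMd := List.eq_nil_or_concat' L.tail
      rcases hMd with h0 | ⟨M, d, hMd⟩
      · exact absurd h0 htail
      have hL_eq : L = c :: (M ++ [d]) := by
        conv_lhs => rw [← List.cons_head_tail hLne]
        rw [hMd]
      have hdL : L.getLast hLne = d := by
        have h1 : L.getLast? = some d := by
          rw [hL_eq]
          have : c :: (M ++ [d]) = (c :: M) ++ [d] := by simp
          rw [this, List.getLast?_concat]
        rw [List.getLast?_eq_getLast hLne] at h1
        injection h1
      have hd_eq : d = (c.1, !c.2) := by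
        rw [hdL] at hcyc
        exact Prod.ext hcyc.1 hcyc.2
      set y := FreeGroup.mk [c] with hy
      set z := FreeGroup.mk M with hz
      have hyinv : y⁻¹ = FreeGroup.mk [d] := by
        rw [hy, FreeGroup.inv_mk]
        congr 1
        simp [FreeGroup.invRev, hd_eq]
      have hxyzy : x = y * z * y⁻¹ := by
        have hlst : ([c] ++ M ++ [d] : List (α × Bool)) = c :: (M ++ [d]) := by simp
        rw [hyinv, hy, hz, FreeGroup.mul_mk, FreeGroup.mul_mk, hlst, ← hL_eq, hLdef,
          FreeGroup.mk_toWord]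
      have hzne : z ≠ 1 := by
        intro hz1
        have : x = 1 := by
          rw [hxyzy, hz1]
          group
        exact hne this
      have hnormz : z.norm < x.norm := by
        have h1 : z.norm ≤ M.length := FreeGroup.norm_mk_le
        have h2 : L.length = M.length + 2 := by
          rw [hL_eq]; simp
        have h3 : x.norm = L.length := rfl
        omega
      have hz1 : z ^ (n+1) = 1 := by
        have hconj : y * z ^ (n+1) * y⁻¹ = 1 := by
          rw [← conj_pow, ← hxyzy]
          exact hpow
        calc z^(n+1) = y⁻¹ * (y * z^(n+1) * y⁻¹) * y := by group
        _ = y⁻¹ * 1 * y := by rw [hconj]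
        _ = 1 := by group
      exact IH z.norm (lt_of_lt_of_le hnormz hxN) z le_rfl hzne n hz1

/-- The free group is torsion-free. -/
theorem freeGroup_pow_ne_one {β : Type*} (x : FreeGroup β) (hx : x ≠ 1) (n : ℕ) :
    x ^ (n+1) ≠ 1 := by
  letI := Classical.decEq β
  exact pow_succ_ne_one x.norm x le_rfl hx n

end TFAux

/-- If `(A, B)` is a PCSP template, `F` a free group on a finite set, `m ≥ 1`, and
`φ : Pol(A,B) → Pol(ℤ^m, F)` a minion homomorphism (it sends every polymorphism
to a group homomorphism `(ℤ^m)ⁿ → F` of the same arity and preserves minors),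
then there is `N` bounding the essential arity of `φ(f)` for every
`f ∈ Pol(A, B)`. -/
theorem bounded_essential_arity_of_minion_hom_to_freeGroup
    {A B : Type} [Finite A] [Finite B]
    (w : ℕ) (ar : Fin w → ℕ)
    (RA : ∀ i, Set (Fin (ar i) → A)) (RB : ∀ i, Set (Fin (ar i) → B))
    (htemplate : ∃ h : A → B, ∀ i : Fin w, ∀ t ∈ RA i, (fun p => h (t p)) ∈ RB i)
    {α : Type} [Finite α] (m : ℕ) (hm : 1 ≤ m)
    (φ : ∀ n : ℕ, {f : (Fin n → A) → B // IsPolymorphism RA RB f} →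
        ((Fin n → (Fin m → ℤ)) → FreeGroup α))
    (hhom : ∀ n f, ∀ x y : Fin n → (Fin m → ℤ), φ n f (x + y) = φ n f x * φ n f y)
    (hminor : ∀ (n n' : ℕ) (π : Fin n → Fin n')
        (f : {f : (Fin n → A) → B // IsPolymorphism RA RB f})
        (g : {g : (Fin n' → A) → B // IsPolymorphism RA RB g}),
        (∀ x, g.1 x = f.1 (fun j => x (π j))) →
        ∀ x, φ n' g x = φ n f (fun j => x (π j))) :
    ∃ N : ℕ, ∀ (n : ℕ) (f : {f : (Fin n → A) → B // IsPolymorphism RA RB f}),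
      {i : Fin n | ∃ x y : Fin n → (Fin m → ℤ),
        (∀ j, j ≠ i → x j = y j) ∧ φ n f x ≠ φ n f y}.ncard ≤ N := by
  classical
  letI : Fintype A := Fintype.ofFinite A
  letI : Fintype B := Fintype.ofFinite B
  obtain ⟨K, hK⟩ : ∃ K, K = Fintype.card ((Fin 2 → A) → B) := ⟨_, rfl⟩
  refine ⟨K * K, ?_⟩
  intro n f
  obtain ⟨Ψ, hΨdef⟩ : ∃ g, g = φ n f := ⟨_, rfl⟩
  rw [← hΨdef]
  have hΨadd : ∀ x y, Ψ (x + y) = Ψ x * Ψ y := by rw [hΨdef]; exact hhom n f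
  have hΨ0 : Ψ 0 = 1 := by
    have h := hΨadd 0 0
    rw [add_zero] at h
    have h2 : Ψ 0 * 1 = Ψ 0 * Ψ 0 := by rw [mul_one]; exact h
    exact (mul_left_cancel h2).symm
  -- general facts about binary minors of f
  have hpoly : ∀ (π : Fin n → Fin 2),
      IsPolymorphism RA RB (fun v : Fin 2 → A => f.1 (fun j => v (π j))) := by
    intro π k ts hts
    exact f.2 k (fun j => ts (π j)) (fun j => hts (π j))
  have hmineval : ∀ (π : Fin n → Fin 2) (x : Fin 2 → (Fin m → ℤ)),
      φ 2 ⟨fun v : Fin 2 → A => f.1 (fun j => v (π j)), hpoly π⟩ x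
        = Ψ (fun j => x (π j)) := by
    rw [hΨdef]
    exact fun π x => hminor n 2 π f _ (fun v => rfl) x
  -- the special binary argument
  obtain ⟨xz, hxzdef⟩ : ∃ F : (Fin m → ℤ) → (Fin 2 → (Fin m → ℤ)),
      F = fun z t => if t = 1 then z else 0 := ⟨_, rfl⟩
  have hxz1 : ∀ z, xz z 1 = z := fun z => by
    rw [hxzdef]
    show (if (1 : Fin 2) = 1 then z else 0) = z
    rw [if_pos rfl]
  have hxz0 : ∀ z, xz z 0 = 0 := fun z => by
    rw [hxzdef]
    show (if (0 : Fin 2) = 1 then z else 0) = 0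
    rw [if_neg (by decide)]
  have hsingle_eval : ∀ (i : Fin n) (z : Fin m → ℤ),
      φ 2 ⟨fun v : Fin 2 → A => f.1 (fun j => v (if j = i then 1 else 0)),
          hpoly (fun j => if j = i then 1 else 0)⟩ (xz z)
        = Ψ (Pi.single i z) := by
    intro i z
    rw [hmineval (fun j => if j = i then 1 else 0) (xz z)]
    congr 1
    funext j
    by_cases hj : j = i
    · subst hj; simp [hxz1, Pi.single_apply]
    · simp [hj, hxz0, Pi.single_apply]
  -- the superset S
  obtain ⟨S, hSdef⟩ : ∃ S : Finset (Fin n),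
      S = Finset.univ.filter (fun i => ∃ z : Fin m → ℤ, Ψ (Pi.single i z) ≠ 1) :=
    ⟨_, rfl⟩
  have hsub : {i : Fin n | ∃ x y : Fin n → (Fin m → ℤ),
      (∀ j, j ≠ i → x j = y j) ∧ Ψ x ≠ Ψ y} ⊆ (S : Set (Fin n)) := by
    intro i hi
    obtain ⟨x, y, hxy, hne⟩ := hi
    have hdiff : x - y = Pi.single i (x i - y i) := by
      funext j
      by_cases hj : j = i
      · subst hj; simp [Pi.single_apply]
      · simp only [Pi.sub_apply, Pi.single_apply, if_neg hj]
        rw [hxy j hj, sub_self]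
    have hz : Ψ (Pi.single i (x i - y i)) ≠ 1 := by
      intro h1
      apply hne
      have hyx : y + (x - y) = x := by abel
      have h5 := hΨadd y (x - y)
      rw [hyx, hdiff, h1, mul_one] at h5
      exact h5
    simp only [hSdef, Finset.coe_filter, Set.mem_setOf_eq, Finset.mem_univ, true_and]
    exact ⟨x i - y i, hz⟩
  have hcard : {i : Fin n | ∃ x y : Fin n → (Fin m → ℤ),
      (∀ j, j ≠ i → x j = y j) ∧ Ψ x ≠ Ψ y}.ncard ≤ S.card := by
    have h1 := Set.ncard_le_ncard hsub S.finite_toSet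
    rwa [Set.ncard_coe_finset] at h1
  refine le_trans hcard ?_
  -- fiberwise bound
  have hfiber : ∀ p : ((Fin 2 → A) → B),
      (S.filter (fun i =>
        (fun v : Fin 2 → A => f.1 (fun j => v (if j = i then 1 else 0))) = p)).card
        ≤ K := by
    intro p
    by_contra hgt
    push_neg at hgt
    obtain ⟨Fb, hFbdef⟩ : ∃ Fb : Finset (Fin n), Fb = S.filter (fun i =>
        (fun v : Fin 2 → A => f.1 (fun j => v (if j = i then 1 else 0))) = p) :=
      ⟨_, rfl⟩
    rw [← hFbdef] at hgt
    have hFbpos : 0 < Fb.card := lt_of_le_of_lt (Nat.zero_le K) hgt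
    obtain ⟨i₀, hi₀⟩ := Finset.card_pos.mp hFbpos
    have hi₀S : i₀ ∈ S := by
      rw [hFbdef] at hi₀
      exact (Finset.mem_filter.mp hi₀).1
    have hz₀ex : ∃ z : Fin m → ℤ, Ψ (Pi.single i₀ z) ≠ 1 := by
      rw [hSdef] at hi₀S
      exact (Finset.mem_filter.mp hi₀S).2
    obtain ⟨z₀, hz₀⟩ := hz₀ex
    obtain ⟨g, hgdef⟩ : ∃ g, g = Ψ (Pi.single i₀ z₀) := ⟨_, rfl⟩
    rw [← hgdef] at hz₀
    have hcommon : ∀ i ∈ Fb, Ψ (Pi.single i z₀) = g := by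
      intro i hi
      rw [hFbdef] at hi hi₀
      have hbi := (Finset.mem_filter.mp hi).2
      have hbi₀ := (Finset.mem_filter.mp hi₀).2
      have hsubeq : (⟨fun v : Fin 2 → A => f.1 (fun j => v (if j = i then 1 else 0)),
            hpoly (fun j => if j = i then 1 else 0)⟩ :
            {h : (Fin 2 → A) → B // IsPolymorphism RA RB h})
          = ⟨fun v : Fin 2 → A => f.1 (fun j => v (if j = i₀ then 1 else 0)),
            hpoly (fun j => if j = i₀ then 1 else 0)⟩ :=
        Subtype.ext (hbi.trans hbi₀.symm)
      rw [← hsingle_eval i z₀, hsubeq, hsingle_eval i₀ z₀, hgdef]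
    have hcollapse : ∀ C : Finset (Fin n), C ⊆ Fb →
        Ψ (fun j => if j ∈ C then z₀ else 0) = g ^ C.card := by
      intro C
      induction C using Finset.induction_on with
      | empty =>
        intro _
        have he : (fun j : Fin n => if j ∈ (∅ : Finset (Fin n)) then z₀ else 0)
            = (0 : Fin n → (Fin m → ℤ)) := by
          funext j; simp
        rw [he, hΨ0, Finset.card_empty, pow_zero]
      | @insert a C haC ih =>
        intro hsub'
        have hC : C ⊆ Fb := fun x hx => hsub' (Finset.mem_insert_of_mem hx)
        have ha : a ∈ Fb := hsub' (Finset.mem_insert_self a C)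
        have hfun : (fun j => if j ∈ insert a C then z₀ else 0)
            = Pi.single a z₀ + (fun j => if j ∈ C then z₀ else 0) := by
          funext j
          by_cases hj : j = a
          · subst hj
            simp [Pi.single_apply, haC]
          · simp [Pi.single_apply, hj, Finset.mem_insert]
        rw [hfun, hΨadd, ih hC, hcommon a ha,
          Finset.card_insert_of_notMem haC, pow_succ']
    -- collapse minors
    have hcollapse_eval : ∀ C : Finset (Fin n), C ⊆ Fb →
        φ 2 ⟨fun v : Fin 2 → A => f.1 (fun j => v (if j ∈ C then 1 else 0)),
            hpoly (fun j => if j ∈ C then 1 else 0)⟩ (xz z₀) = g ^ C.card := by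
      intro C hC
      rw [hmineval (fun j => if j ∈ C then 1 else 0) (xz z₀)]
      rw [← hcollapse C hC]
      congr 1
      funext j
      by_cases hj : j ∈ C
      · simp [hj, hxz1]
      · simp [hj, hxz0]
    -- choice of subsets of each size
    have hchoose : ∀ s : ℕ, ∃ C : Finset (Fin n), s ≤ K → (C ⊆ Fb ∧ C.card = s) := by
      intro s
      by_cases hs : s ≤ K
      · obtain ⟨C, hC1, hC2⟩ :=
          Finset.exists_subset_card_eq (le_of_lt (lt_of_le_of_lt hs hgt) :
            s ≤ Fb.card)
        exact ⟨C, fun _ => ⟨hC1, hC2⟩⟩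
      · exact ⟨∅, fun h => absurd h hs⟩
    choose Csub hCsub using hchoose
    -- pigeonhole
    have hpig := Finset.exists_ne_map_eq_of_card_lt_of_maps_to
      (s := Finset.range (K+1)) (t := (Finset.univ : Finset ((Fin 2 → A) → B)))
      (by rw [Finset.card_range, Finset.card_univ, ← hK]; exact Nat.lt_succ_self K)
      (f := fun s v => f.1 (fun j => v (if j ∈ Csub s then 1 else 0)))
      (fun x _ => Finset.mem_univ _)
    obtain ⟨s₁, hs₁, s₂, hs₂, hne12, hequ⟩ := hpig
    have key : ∀ t₁ t₂ : ℕ, t₁ < t₂ → t₂ ≤ K →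
        (fun v : Fin 2 → A => f.1 (fun j => v (if j ∈ Csub t₁ then 1 else 0)))
          = (fun v : Fin 2 → A => f.1 (fun j => v (if j ∈ Csub t₂ then 1 else 0))) →
        False := by
      intro t₁ t₂ hlt ht₂ hu
      have ht₁ : t₁ ≤ K := le_of_lt (lt_of_lt_of_le hlt ht₂)
      have h₁ := hCsub t₁ ht₁
      have h₂ := hCsub t₂ ht₂
      have hsubeq : (⟨fun v : Fin 2 → A => f.1 (fun j => v (if j ∈ Csub t₁ then 1 else 0)),
            hpoly (fun j => if j ∈ Csub t₁ then 1 else 0)⟩ :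
            {h : (Fin 2 → A) → B // IsPolymorphism RA RB h})
          = ⟨fun v : Fin 2 → A => f.1 (fun j => v (if j ∈ Csub t₂ then 1 else 0)),
            hpoly (fun j => if j ∈ Csub t₂ then 1 else 0)⟩ := Subtype.ext hu
      have e₁ := hcollapse_eval (Csub t₁) h₁.1
      have e₂ := hcollapse_eval (Csub t₂) h₂.1
      rw [h₁.2] at e₁
      rw [h₂.2] at e₂
      have hgg : g ^ t₁ = g ^ t₂ := by
        rw [← e₁, ← e₂, hsubeq]
      have hpow1 : g ^ (t₂ - t₁) = 1 := by
        have h3 : g ^ t₁ * g ^ (t₂ - t₁) = g ^ t₁ * 1 := by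
          rw [mul_one, ← pow_add]
          rw [hgg]
          congr 1
          exact Nat.add_sub_cancel' (le_of_lt hlt)
        exact mul_left_cancel h3
      have hform : t₂ - t₁ = (t₂ - t₁ - 1) + 1 := (Nat.succ_pred_eq_of_pos (Nat.sub_pos_of_lt hlt)).symm
      rw [hform] at hpow1
      exact TFAux.freeGroup_pow_ne_one g hz₀ (t₂ - t₁ - 1) hpow1
    have hs₁' : s₁ ≤ K := Nat.lt_succ_iff.mp (Finset.mem_range.mp hs₁)
    have hs₂' : s₂ ≤ K := Nat.lt_succ_iff.mp (Finset.mem_range.mp hs₂)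
    rcases lt_or_gt_of_ne hne12 with h | h
    · exact key s₁ s₂ h hs₂' hequ
    · exact key s₂ s₁ h hs₁' hequ.symm
  -- sum over fibers
  have hsum : S.card = ∑ p ∈ (Finset.univ : Finset ((Fin 2 → A) → B)),
      (S.filter (fun i =>
        (fun v : Fin 2 → A => f.1 (fun j => v (if j = i then 1 else 0))) = p)).card :=
    Finset.card_eq_sum_card_fiberwise (fun x _ => Finset.mem_univ _)
  rw [hsum]
  calc (∑ p ∈ (Finset.univ : Finset ((Fin 2 → A) → B)),
      (S.filter (fun i =>
        (fun v : Fin 2 → A => f.1 (fun j => v (if j = i then 1 else 0))) = p)).card)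
      ≤ (Finset.univ : Finset ((Fin 2 → A) → B)).card * K := by
        apply Finset.sum_le_card_nsmul
        intro p _
        exact hfiber p
    _ = K * K := by rw [Finset.card_univ, ← hK]
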